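/- Let uV, uF : ℤ × ℤ → (Fin 3 → ℝ), and suppose σV, σF : ℤ × ℤ → ℝ and σ̃V, σ̃F : ℤ × ℤ → ℝ are all nowhere zero and both satisfy ⟪uV(v), uF(f)⟫ = σV(v)·σF(f) and ⟪uV(v), uF(f)⟫ = σ̃V(v)·σ̃F(f) for every incident vertex–face pair (v, f). Then there exists α ∈ ℝ, α ≠ 0, such that σ̃V(v) = α·σV(v) for all v ∈ ℤ × ℤ and σ̃F(f) = α⁻¹·σF(f) for all f ∈ ℤ × ℤ. (Hence every orthogonal bi*net has exactly a one-parameter family of normal binets, equivalently of Laguerre lifts.) -/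

import Mathlib

open Matrix

/-- A vertex `v` is incident to the face labeled `f` if `v` is one of its four corners. -/
def Incident (v f : ℤ × ℤ) : Prop :=
  v = f ∨ v = f + (1, 0) ∨ v = f + (0, 1) ∨ v = f + (1, 1)

/-- Any two choices of nowhere-zero functions `σ` with `⟪uV v, uF f⟫ = σV(v)σF(f)` on incident
pairs differ by a nonzero constant `α`, multiplied on vertices and divided on faces.
Hence every orthogonal bi*net has exactly a one-parameter family of normal binets. -/
theorem stmt_8 (uV uF : ℤ × ℤ → Fin 3 → ℝ) (σV σF σV' σF' : ℤ × ℤ → ℝ)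
    (hσV : ∀ v : ℤ × ℤ, σV v ≠ 0) (hσF : ∀ f : ℤ × ℤ, σF f ≠ 0)
    (hσV' : ∀ v : ℤ × ℤ, σV' v ≠ 0) (hσF' : ∀ f : ℤ × ℤ, σF' f ≠ 0)
    (h : ∀ v f : ℤ × ℤ, Incident v f → uV v ⬝ᵥ uF f = σV v * σF f)
    (h' : ∀ v f : ℤ × ℤ, Incident v f → uV v ⬝ᵥ uF f = σV' v * σF' f) :
    ∃ α : ℝ, α ≠ 0 ∧ (∀ v : ℤ × ℤ, σV' v = α * σV v) ∧
      (∀ f : ℤ × ℤ, σF' f = α⁻¹ * σF f) := by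
  have key : ∀ v f : ℤ × ℤ, Incident v f → σV' v / σV v = σF f / σF' f := by
    intro v f hvf
    have e1 := h v f hvf
    have e2 := h' v f hvf
    have e : σV v * σF f = σV' v * σF' f := e1.symm.trans e2
    rw [div_eq_div_iff (hσV v) (hσF' f)]
    linear_combination -e
  -- ratio R v := σV' v / σV v
  have keyV : ∀ v w f : ℤ × ℤ, Incident v f → Incident w f →
      σV' v / σV v = σV' w / σV w := by
    intro v w f hv hw
    rw [key v f hv, key w f hw]
  have stepR : ∀ a b : ℤ, σV' (a + 1, b) / σV (a + 1, b) = σV' (a, b) / σV (a, b) := by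
    intro a b
    apply keyV _ _ (a, b)
    · right; left; ext <;> simp
    · left; rfl
  have stepU : ∀ a b : ℤ, σV' (a, b + 1) / σV (a, b + 1) = σV' (a, b) / σV (a, b) := by
    intro a b
    apply keyV _ _ (a, b)
    · right; right; left; ext <;> simp
    · left; rfl
  have hconst : ∀ v : ℤ × ℤ, σV' v / σV v = σV' (0, 0) / σV (0, 0) := by
    rintro ⟨a, b⟩
    have hA : ∀ a : ℤ, σV' (a, b) / σV (a, b) = σV' (0, b) / σV (0, b) := by
      intro a
      induction a using Int.induction_on with
      | zero => rfl
      | succ k ih => rw [stepR k b, ih]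
      | pred k ih => rw [← ih, ← stepR (-k - 1) b]; norm_num
    have hB : ∀ b : ℤ, σV' (0, b) / σV (0, b) = σV' (0, 0) / σV (0, 0) := by
      intro b
      induction b using Int.induction_on with
      | zero => rfl
      | succ k ih => rw [stepU 0 k, ih]
      | pred k ih => rw [← ih, ← stepU 0 (-k - 1)]; norm_num
    rw [hA a, hB b]
  set α := σV' (0, 0) / σV (0, 0) with hα
  have hα0 : α ≠ 0 := div_ne_zero (hσV' _) (hσV _)
  refine ⟨α, hα0, ?_, ?_⟩
  · intro v
    have hv := hconst v
    rw [div_eq_iff (hσV v)] at hv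
    rw [hv]
  · intro f
    have h1 : σV' f / σV f = σF f / σF' f := key f f (Or.inl rfl)
    have h2 := hconst f
    rw [h2] at h1
    rw [eq_comm, div_eq_iff (hσF' f)] at h1
    rw [h1, inv_mul_cancel_left₀ hα0]
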